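/- Let α, C > 0, let f : (0,1]² → ℝ be mixed α-Hölder with constant C with respect to the dyadic metrics, and let A : ℝ → ℝ be twice continuously differentiable with A'' Lipschitz on the closed interval [inf f, sup f]. Then there exists a constant C' > 0, depending only on C, the sup of |A''| on [inf f, sup f], and the Lipschitz constant of A'' on [inf f, sup f], such that for all x, y, x', y' ∈ (0,1]: | [A(f(y,y')) − A(f(x,y')) − A(f(y,x')) + A(f(x,x'))] − A'(f(x,x'))·[f(y,y') − f(x,y') − f(y,x') + f(x,x')] − A''(f(x,x'))·[f(y,x') − f(x,x')]·[f(x,y') − f(x,x')] | ≤ C' ( d(x,y)^{2α} d(x',y')^{α} + d(x,y)^{α} d(x',y')^{2α} ). -/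

import Mathlib

open MeasureTheory Set Filter

/-- The index `k` of the scale-`j` dyadic interval `(2^{-j} k, 2^{-j}(k+1)]` containing `x`. -/
noncomputable def dyadicIndex (j : ℕ) (x : ℝ) : ℤ := ⌈(2:ℝ) ^ j * x⌉ - 1

/-- The scale-`j` dyadic interval `I^j_k = (2^{-j} k, 2^{-j}(k+1)]`. -/
noncomputable def dyadicInterval (j : ℕ) (k : ℤ) : Set ℝ :=
  Set.Ioc ((2:ℝ) ^ (-(j:ℤ)) * k) ((2:ℝ) ^ (-(j:ℤ)) * (k + 1))

/-- The dyadic averaging operator `P^j`:  `(P^j f)(x) = 2^j ∫_{I^j_k} f`, where `I^j_k` is the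
scale-`j` dyadic interval containing `x`. -/
noncomputable def dyadicAvg (j : ℕ) (f : ℝ → ℝ) (x : ℝ) : ℝ :=
  (2:ℝ) ^ j * ∫ t in dyadicInterval j (dyadicIndex j x), f t

/-- The dyadic metric on `(0,1]`:
`d(x,y) = inf { 2^{-j} : x and y lie in the same scale-j dyadic interval }` for `x ≠ y`,
and `d(x,x) = 0`. -/
noncomputable def dyadicDist (x y : ℝ) : ℝ :=
  if x = y then 0
  else sInf {r : ℝ | ∃ j : ℕ, r = (2:ℝ) ^ (-(j:ℤ)) ∧ dyadicIndex j x = dyadicIndex j y}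

/-- `f` is `α`-Hölder with constant `C` on `(0,1]` with respect to the dyadic metric. -/
def HolderDyadic (α C : ℝ) (f : ℝ → ℝ) : Prop :=
  ∀ x ∈ Set.Ioc (0:ℝ) 1, ∀ y ∈ Set.Ioc (0:ℝ) 1, |f x - f y| ≤ C * dyadicDist x y ^ α

/-- `g` is mixed `α`-Hölder with constant `C` on `(0,1]²` with respect to the dyadic metrics. -/
def MixedHolderDyadic (α C : ℝ) (g : ℝ → ℝ → ℝ) : Prop :=
  ∀ x ∈ Set.Ioc (0:ℝ) 1, ∀ y ∈ Set.Ioc (0:ℝ) 1, ∀ x' ∈ Set.Ioc (0:ℝ) 1, ∀ y' ∈ Set.Ioc (0:ℝ) 1,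
    |g y x' - g x x'| ≤ C * dyadicDist x y ^ α ∧
    |g x y' - g x x'| ≤ C * dyadicDist x' y' ^ α ∧
    |g y y' - g x y' - g y x' + g x x'| ≤ C * (dyadicDist x y ^ α * dyadicDist x' y' ^ α)

/-- Dyadic averaging at scale `j` in the first variable. -/
noncomputable def avgFst (j : ℕ) (g : ℝ → ℝ → ℝ) (x x' : ℝ) : ℝ := dyadicAvg j (fun t => g t x') x

/-- Dyadic averaging at scale `j'` in the second variable. -/
noncomputable def avgSnd (j' : ℕ) (g : ℝ → ℝ → ℝ) (x x' : ℝ) : ℝ := dyadicAvg j' (fun t => g x t) x'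

/-- The double averaging operator `P^j P'^{j'}`. -/
noncomputable def avg2 (j j' : ℕ) (g : ℝ → ℝ → ℝ) : ℝ → ℝ → ℝ := avgFst j (avgSnd j' g)

/-- The mixed martingale difference `Δ_j Δ'_{j'} g`. -/
noncomputable def mixedDiff (j j' : ℕ) (g : ℝ → ℝ → ℝ) (x x' : ℝ) : ℝ :=
  avg2 (j+1) (j'+1) g x x' - avg2 j (j'+1) g x x' - avg2 (j+1) j' g x x' + avg2 j j' g x x'

/-- `Δ_j P'^{j'} g`: martingale difference in the first variable, average in the second. -/
noncomputable def diffFstAvgSnd (j j' : ℕ) (g : ℝ → ℝ → ℝ) (x x' : ℝ) : ℝ :=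
  avg2 (j+1) j' g x x' - avg2 j j' g x x'

/-- `P^j Δ'_{j'} g`: average in the first variable, martingale difference in the second. -/
noncomputable def avgFstDiffSnd (j j' : ℕ) (g : ℝ → ℝ → ℝ) (x x' : ℝ) : ℝ :=
  avg2 j (j'+1) g x x' - avg2 j j' g x x'

/-- The (unnormalized) Haar function `ψ^j_k`: `+1` on the right half of `I^j_k`, `-1` on its
left half, `0` elsewhere. -/
noncomputable def haarFn (j : ℕ) (k : ℤ) (x : ℝ) : ℝ :=
  if x ∈ Set.Ioc ((2:ℝ) ^ (-(j:ℤ)) * k + (2:ℝ) ^ (-(j:ℤ) - 1)) ((2:ℝ) ^ (-(j:ℤ)) * (k + 1)) then 1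
  else if x ∈ Set.Ioc ((2:ℝ) ^ (-(j:ℤ)) * k) ((2:ℝ) ^ (-(j:ℤ)) * k + (2:ℝ) ^ (-(j:ℤ) - 1)) then -1
  else 0

lemma dyadicDist_nonneg (x y : ℝ) : 0 ≤ dyadicDist x y := by
  unfold dyadicDist
  split
  · exact le_refl _
  · exact Real.sInf_nonneg (by rintro r ⟨j, rfl, -⟩; positivity)

lemma dyadicIndex_zero_eq (x : ℝ) (hx : x ∈ Set.Ioc (0:ℝ) 1) : dyadicIndex 0 x = 0 := by
  unfold dyadicIndex
  have h : ⌈(2:ℝ)^(0:ℕ) * x⌉ = 1 := by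
    rw [Int.ceil_eq_iff]
    simp only [pow_zero, one_mul, Int.cast_one]
    exact ⟨by linarith [hx.1], hx.2⟩
  omega

lemma dyadicDist_le_one (x y : ℝ) (hx : x ∈ Set.Ioc (0:ℝ) 1) (hy : y ∈ Set.Ioc (0:ℝ) 1) :
    dyadicDist x y ≤ 1 := by
  unfold dyadicDist
  split
  · norm_num
  · apply csInf_le
    · exact ⟨0, by rintro r ⟨j, rfl, -⟩; positivity⟩
    · exact ⟨0, by norm_num, by rw [dyadicIndex_zero_eq x hx, dyadicIndex_zero_eq y hy]⟩

lemma core_mvt (A : ℝ → ℝ) (hA : ContDiff ℝ 2 A) (a u v w : ℝ) :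
    ∃ ξ ∈ Set.Ioo (0:ℝ) 1, ∃ η ∈ Set.Ioo (0:ℝ) 1,
      A (a+u+v+w) - A (a+v) - A (a+u) + A a =
        deriv (deriv A) (a + ξ*u + η*(v + ξ*w)) * (v+ξ*w) * (u+η*w)
        + deriv A (a + ξ*u + η*(v + ξ*w)) * w := by
  have hA1 : Differentiable ℝ A := hA.differentiable two_ne_zero
  have h2 : ContDiff ℝ ((1:WithTop ℕ∞)+1) A := by exact_mod_cast hA
  have hA2 : ContDiff ℝ 1 (deriv A) := (contDiff_succ_iff_deriv.mp h2).2.2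
  have hA1d : Differentiable ℝ (deriv A) := hA2.differentiable one_ne_zero
  have hcont : Continuous fun θ : ℝ => A (a + θ*(u+w) + v) - A (a + θ*u) :=
    (hA.continuous.comp (by continuity)).sub (hA.continuous.comp (by continuity))
  obtain ⟨ξ, hξ, hs1⟩ := exists_hasDerivAt_eq_slope
      (fun θ : ℝ => A (a + θ*(u+w) + v) - A (a + θ*u))
      (fun θ : ℝ => deriv A (a + θ*(u+w) + v) * (u+w) - deriv A (a + θ*u) * u)
      zero_lt_one hcont.continuousOn (by
        intro θ _
        have i1 : HasDerivAt (fun θ:ℝ => a + θ*(u+w) + v) (u+w) θ := by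
          simpa using (((hasDerivAt_id θ).mul_const (u+w)).const_add a).add_const v
        have i2 : HasDerivAt (fun θ:ℝ => a + θ*u) u θ := by
          simpa using ((hasDerivAt_id θ).mul_const u).const_add a
        have c1 := ((hA1 _).hasDerivAt.comp θ i1)
        have c2 := ((hA1 _).hasDerivAt.comp θ i2)
        exact c1.sub c2)
  have hcont2 : Continuous fun θ : ℝ => deriv A (a + ξ*u + θ*(v+ξ*w)) * (u + θ*w) :=
    (hA2.continuous.comp (by continuity)).mul (by continuity)
  obtain ⟨η, hη, hs2⟩ := exists_hasDerivAt_eq_slope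
      (fun θ : ℝ => deriv A (a + ξ*u + θ*(v+ξ*w)) * (u + θ*w))
      (fun θ : ℝ => deriv (deriv A) (a + ξ*u + θ*(v+ξ*w)) * (v+ξ*w) * (u+θ*w)
        + deriv A (a + ξ*u + θ*(v+ξ*w)) * w)
      zero_lt_one hcont2.continuousOn (by
        intro θ _
        have i3 : HasDerivAt (fun θ:ℝ => a + ξ*u + θ*(v+ξ*w)) (v+ξ*w) θ := by
          simpa using ((hasDerivAt_id θ).mul_const (v+ξ*w)).const_add (a+ξ*u)
        have g1 : HasDerivAt (fun θ:ℝ => deriv A (a+ξ*u+θ*(v+ξ*w)))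
            (deriv (deriv A) (a+ξ*u+θ*(v+ξ*w)) * (v+ξ*w)) θ := by
          exact (hA1d _).hasDerivAt.comp θ i3
        have g2 : HasDerivAt (fun θ:ℝ => u + θ*w) w θ := by
          simpa using ((hasDerivAt_id θ).mul_const w).const_add u
        exact g1.mul g2)
  refine ⟨ξ, hξ, η, hη, ?_⟩
  norm_num at hs1 hs2
  have e1 : a + ξ*u + 1*(v+ξ*w) = a + ξ*(u+w) + v := by ring
  have e2 : a + ξ*u + 0*(v+ξ*w) = a + ξ*u := by ring
  have e3 : a + 1*(u+w) + v = a + u + v + w := by ring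
  have e4 : a + 0*(u+w) + v = a + v := by ring
  have e5 : a + (1:ℝ)*u = a + u := by ring
  have e6 : a + (0:ℝ)*u = a := by ring
  rw [e1, e2, e3, e4, e5, e6] at *
  ring_nf at hs1 hs2 ⊢
  linarith


set_option maxHeartbeats 2000000 in
lemma final_est (A1 A1a A2 A2a u v w ξ η B Kr C D1 D2 : ℝ)
    (hξ : ξ ∈ Set.Ioo (0:ℝ) 1) (hη : η ∈ Set.Ioo (0:ℝ) 1)
    (hB0 : 0 ≤ B) (hK0 : 0 ≤ Kr) (hC : 0 < C)
    (hE1 : |A1 - A1a| ≤ B * (|u| + |v| + |w|))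
    (hE2 : |A2 - A2a| ≤ Kr * (|u| + |v| + |w|))
    (hE3 : |A2| ≤ B)
    (hD10 : 0 ≤ D1) (hD11 : D1 ≤ 1) (hD20 : 0 ≤ D2) (hD21 : D2 ≤ 1)
    (hu' : |u| ≤ C*D1) (hv' : |v| ≤ C*D2) (hw' : |w| ≤ C*(D1*D2)) :
    |A2 * (v+ξ*w) * (u+η*w) + A1 * w - A1a * w - A2a * u * v|
      ≤ (4*B*C^2 + 2*Kr*C^3 + 1) * (D1*D1*D2 + D1*D2*D2) := by
  have hu0 : (0:ℝ) ≤ |u| := abs_nonneg u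
  have hv0 : (0:ℝ) ≤ |v| := abs_nonneg v
  have hw0 : (0:ℝ) ≤ |w| := abs_nonneg w
  have hX : A2 * (v+ξ*w) * (u+η*w) + A1 * w - A1a * w - A2a * u * v
      = (A1 - A1a) * w + (A2 - A2a) * (u*v)
        + A2 * (η*(v*w) + ξ*(u*w) + ξ*η*(w*w)) := by ring
  have hinner : |η*(v*w) + ξ*(u*w) + ξ*η*(w*w)| ≤ |v| * |w| + |u| * |w| + |w| * |w| := by
    have l1 : |η*(v*w)| ≤ |v| * |w| := by
      rw [abs_mul, abs_mul, abs_of_pos hη.1]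
      exact mul_le_of_le_one_left (by positivity) hη.2.le
    have l2 : |ξ*(u*w)| ≤ |u| * |w| := by
      rw [abs_mul, abs_mul, abs_of_pos hξ.1]
      exact mul_le_of_le_one_left (by positivity) hξ.2.le
    have l3 : |ξ*η*(w*w)| ≤ |w| * |w| := by
      rw [abs_mul, abs_mul, abs_mul, abs_of_pos hξ.1, abs_of_pos hη.1]
      have hle : ξ*η ≤ 1 := by nlinarith [hξ.1.le, hη.1.le, hξ.2.le, hη.2.le]
      calc ξ * η * (|w| * |w|) ≤ 1 * (|w| * |w|) :=
            mul_le_mul_of_nonneg_right hle (by positivity)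
        _ = |w| * |w| := one_mul _
    calc |η*(v*w) + ξ*(u*w) + ξ*η*(w*w)| ≤ |η*(v*w)| + |ξ*(u*w)| + |ξ*η*(w*w)| :=
          abs_add_three _ _ _
      _ ≤ |v| * |w| + |u| * |w| + |w| * |w| := by linarith
  have s1 : |A1 - A1a| * |w| ≤ B * ((|u| + |v| + |w|) * |w|) := by
    calc |A1 - A1a| * |w| ≤ (B * (|u| + |v| + |w|)) * |w| :=
          mul_le_mul_of_nonneg_right hE1 hw0
      _ = B * ((|u| + |v| + |w|) * |w|) := by ring
  have s2 : |A2 - A2a| * (|u| * |v|) ≤ Kr * ((|u| + |v| + |w|) * (|u| * |v|)) := by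
    calc |A2 - A2a| * (|u| * |v|) ≤ (Kr * (|u| + |v| + |w|)) * (|u| * |v|) :=
          mul_le_mul_of_nonneg_right hE2 (by positivity)
      _ = Kr * ((|u| + |v| + |w|) * (|u| * |v|)) := by ring
  have s3 : |A2| * |η*(v*w) + ξ*(u*w) + ξ*η*(w*w)|
      ≤ B * (|v| * |w| + |u| * |w| + |w| * |w|) :=
    mul_le_mul hE3 hinner (abs_nonneg _) hB0
  have habs : |A2 * (v+ξ*w) * (u+η*w) + A1 * w - A1a * w - A2a * u * v|
      ≤ B * ((|u| + |v| + |w|) * |w|) + Kr * ((|u| + |v| + |w|) * (|u| * |v|))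
        + B * (|v| * |w| + |u| * |w| + |w| * |w|) := by
    rw [hX]
    calc |(A1 - A1a) * w + (A2 - A2a) * (u*v) + A2 * (η*(v*w) + ξ*(u*w) + ξ*η*(w*w))|
        ≤ |(A1 - A1a) * w| + |(A2 - A2a) * (u*v)|
          + |A2 * (η*(v*w) + ξ*(u*w) + ξ*η*(w*w))| := abs_add_three _ _ _
      _ = |A1 - A1a| * |w| + |A2 - A2a| * (|u| * |v|)
          + |A2| * |η*(v*w) + ξ*(u*w) + ξ*η*(w*w)| := by
            rw [abs_mul, abs_mul, abs_mul, abs_mul]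
      _ ≤ _ := by linarith
  have hD22 : D2 * D2 ≤ D2 := mul_le_of_le_one_left hD20 hD21
  have k1 : |u| * |w| ≤ C^2*(D1*D1*D2) := by
    calc |u| * |w| ≤ (C*D1) * (C*(D1*D2)) := mul_le_mul hu' hw' hw0 (by positivity)
      _ = C^2*(D1*D1*D2) := by ring
  have k2 : |v| * |w| ≤ C^2*(D1*D2*D2) := by
    calc |v| * |w| ≤ (C*D2) * (C*(D1*D2)) := mul_le_mul hv' hw' hw0 (by positivity)
      _ = C^2*(D1*D2*D2) := by ring
  have k3 : |w| * |w| ≤ C^2*(D1*D1*D2) := by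
    calc |w| * |w| ≤ (C*(D1*D2)) * (C*(D1*D2)) := mul_le_mul hw' hw' hw0 (by positivity)
      _ = (C^2*(D1*D1)) * (D2*D2) := by ring
      _ ≤ (C^2*(D1*D1)) * D2 := mul_le_mul_of_nonneg_left hD22 (by positivity)
      _ = C^2*(D1*D1*D2) := by ring
  have kuv : |u| * |v| ≤ (C*D1) * (C*D2) := mul_le_mul hu' hv' hv0 (by positivity)
  have k4 : |u| * (|u| * |v|) ≤ C^3*(D1*D1*D2) := by
    calc |u| * (|u| * |v|) ≤ (C*D1) * ((C*D1) * (C*D2)) :=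
          mul_le_mul hu' kuv (by positivity) (by positivity)
      _ = C^3*(D1*D1*D2) := by ring
  have k5 : |v| * (|u| * |v|) ≤ C^3*(D1*D2*D2) := by
    calc |v| * (|u| * |v|) ≤ (C*D2) * ((C*D1) * (C*D2)) :=
          mul_le_mul hv' kuv (by positivity) (by positivity)
      _ = C^3*(D1*D2*D2) := by ring
  have k6 : |w| * (|u| * |v|) ≤ C^3*(D1*D1*D2) := by
    calc |w| * (|u| * |v|) ≤ (C*(D1*D2)) * ((C*D1) * (C*D2)) :=
          mul_le_mul hw' kuv (by positivity) (by positivity)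
      _ = (C^3*(D1*D1)) * (D2*D2) := by ring
      _ ≤ (C^3*(D1*D1)) * D2 := mul_le_mul_of_nonneg_left hD22 (by positivity)
      _ = C^3*(D1*D1*D2) := by ring
  have pos1 : (0:ℝ) ≤ C^2*(D1*D2*D2) := by positivity
  have pos2 : (0:ℝ) ≤ C^2*(D1*D1*D2) := by positivity
  have pos3 : (0:ℝ) ≤ C^3*(D1*D2*D2) := by positivity
  have pos4 : (0:ℝ) ≤ C^3*(D1*D1*D2) := by positivity
  have T1 : (|u| + |v| + |w|) * |w| ≤ 2*C^2*(D1*D1*D2 + D1*D2*D2) := by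
    have e : (|u| + |v| + |w|) * |w| = |u| * |w| + |v| * |w| + |w| * |w| := by ring
    rw [e]; linarith
  have T2 : (|u| + |v| + |w|) * (|u| * |v|) ≤ 2*C^3*(D1*D1*D2 + D1*D2*D2) := by
    have e : (|u| + |v| + |w|) * (|u| * |v|)
        = |u| * (|u| * |v|) + |v| * (|u| * |v|) + |w| * (|u| * |v|) := by ring
    rw [e]; linarith
  have T3 : |v| * |w| + |u| * |w| + |w| * |w| ≤ 2*C^2*(D1*D1*D2 + D1*D2*D2) := by linarith
  have m1 : B * ((|u| + |v| + |w|) * |w|) ≤ B * (2*C^2*(D1*D1*D2 + D1*D2*D2)) :=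
    mul_le_mul_of_nonneg_left T1 hB0
  have m2 : Kr * ((|u| + |v| + |w|) * (|u| * |v|)) ≤ Kr * (2*C^3*(D1*D1*D2 + D1*D2*D2)) :=
    mul_le_mul_of_nonneg_left T2 hK0
  have m3 : B * (|v| * |w| + |u| * |w| + |w| * |w|) ≤ B * (2*C^2*(D1*D1*D2 + D1*D2*D2)) :=
    mul_le_mul_of_nonneg_left T3 hB0
  have pos5 : (0:ℝ) ≤ D1*D1*D2 + D1*D2*D2 := by positivity
  nlinarith [habs, m1, m2, m3, pos5]

set_option maxHeartbeats 2000000 in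
/-- Second-order mixed Taylor estimate: if `f` is mixed `α`-Hölder with
constant `C` and `A` is `C²` with `A''` Lipschitz on `[inf f, sup f]`, then there is `C' > 0`
such that the second-order mixed Taylor remainder of `A ∘ f` is bounded by
`C' (d(x,y)^{2α} d(x',y')^{α} + d(x,y)^{α} d(x',y')^{2α})`. -/
theorem second_order_mixed_taylor
    (α C : ℝ) (hα : 0 < α) (hC : 0 < C)
    (f : ℝ → ℝ → ℝ) (hf : MixedHolderDyadic α C f)
    (A : ℝ → ℝ) (hA : ContDiff ℝ 2 A)
    (K : NNReal)
    (hlip : LipschitzOnWith K (deriv (deriv A))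
      (Set.Icc (sInf (Set.image2 f (Set.Ioc 0 1) (Set.Ioc 0 1)))
        (sSup (Set.image2 f (Set.Ioc 0 1) (Set.Ioc 0 1))))) :
    ∃ C' > 0, ∀ x ∈ Set.Ioc (0:ℝ) 1, ∀ y ∈ Set.Ioc (0:ℝ) 1,
      ∀ x' ∈ Set.Ioc (0:ℝ) 1, ∀ y' ∈ Set.Ioc (0:ℝ) 1,
      |(A (f y y') - A (f x y') - A (f y x') + A (f x x'))
          - deriv A (f x x') * (f y y' - f x y' - f y x' + f x x')
          - deriv (deriv A) (f x x') * (f y x' - f x x') * (f x y' - f x x')|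
        ≤ C' * (dyadicDist x y ^ (2 * α) * dyadicDist x' y' ^ α
            + dyadicDist x y ^ α * dyadicDist x' y' ^ (2 * α)) := by
  have h1 : (1:ℝ) ∈ Set.Ioc (0:ℝ) 1 := ⟨zero_lt_one, le_refl 1⟩
  set S := Set.image2 f (Set.Ioc (0:ℝ) 1) (Set.Ioc (0:ℝ) 1) with hS
  -- boundedness of the image
  have hbound : ∀ z ∈ S, |z - f 1 1| ≤ 2*C := by
    rintro z ⟨x, hx, x', hx', rfl⟩
    have hpow : ∀ a b : ℝ, a ∈ Set.Ioc (0:ℝ) 1 → b ∈ Set.Ioc (0:ℝ) 1 →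
        dyadicDist a b ^ α ≤ 1 := fun a b ha hb =>
      Real.rpow_le_one (dyadicDist_nonneg a b) (dyadicDist_le_one a b ha hb) hα.le
    have t1 := (hf x hx x hx 1 h1 x' hx').2.1
    have t2 := (hf 1 h1 x hx 1 h1 1 h1).1
    have b1 : |f x x' - f x 1| ≤ C := t1.trans (by
      nlinarith [hpow 1 x' h1 hx', Real.rpow_nonneg (dyadicDist_nonneg 1 x') α])
    have b2 : |f x 1 - f 1 1| ≤ C := t2.trans (by
      nlinarith [hpow 1 x h1 hx, Real.rpow_nonneg (dyadicDist_nonneg 1 x) α])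
    calc |f x x' - f 1 1| ≤ |f x x' - f x 1| + |f x 1 - f 1 1| := abs_sub_le _ _ _
      _ ≤ 2*C := by linarith
  have hne : S.Nonempty := ⟨f 1 1, 1, h1, 1, h1, rfl⟩
  have hbdd_below : BddBelow S := ⟨f 1 1 - 2*C, fun z hz => by
    have := hbound z hz; rw [abs_le] at this; linarith [this.1]⟩
  have hbdd_above : BddAbove S := ⟨f 1 1 + 2*C, fun z hz => by
    have := hbound z hz; rw [abs_le] at this; linarith [this.2]⟩
  set m := sInf S with hm
  set M := sSup S with hM
  have hSmem : ∀ z ∈ S, z ∈ Set.Icc m M := fun z hz =>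
    ⟨csInf_le hbdd_below hz, le_csSup hbdd_above hz⟩
  -- second derivative continuity and bound
  have h2 : ContDiff ℝ ((1:WithTop ℕ∞)+1) A := by exact_mod_cast hA
  have hA2 : ContDiff ℝ 1 (deriv A) := (contDiff_succ_iff_deriv.mp h2).2.2
  have hA1d : Differentiable ℝ (deriv A) := hA2.differentiable one_ne_zero
  have hA2c : Continuous (deriv (deriv A)) := (contDiff_one_iff_deriv.mp hA2).2
  obtain ⟨M₂, hM₂⟩ := (isCompact_Icc (a := m) (b := M)).exists_bound_of_continuousOn
    hA2c.continuousOn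
  set B := max M₂ 0 with hB
  have hB0 : 0 ≤ B := le_max_right _ _
  have hBb : ∀ z ∈ Set.Icc m M, |deriv (deriv A) z| ≤ B := fun z hz => by
    have := hM₂ z hz; rw [Real.norm_eq_abs] at this; exact this.trans (le_max_left _ _)
  -- Lipschitz bound for deriv A on [m, M]
  have hA'lip : ∀ p ∈ Set.Icc m M, ∀ q ∈ Set.Icc m M,
      |deriv A p - deriv A q| ≤ B * |p - q| := by
    intro p hp q hq
    have := (convex_Icc m M).norm_image_sub_le_of_norm_deriv_le
      (fun z _ => hA1d z) (fun z hz => by rw [Real.norm_eq_abs]; exact hBb z hz)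
      hq hp
    rwa [Real.norm_eq_abs, Real.norm_eq_abs] at this
  have hKlip : ∀ p ∈ Set.Icc m M, ∀ q ∈ Set.Icc m M,
      |deriv (deriv A) p - deriv (deriv A) q| ≤ (K:ℝ) * |p - q| := by
    intro p hp q hq
    have := hlip.dist_le_mul p hp q hq
    rwa [Real.dist_eq, Real.dist_eq] at this
  refine ⟨4*B*C^2 + 2*(K:ℝ)*C^3 + 1, by positivity, ?_⟩
  intro x hx y hy x' hx' y' hy'
  obtain ⟨hu, hv, hw⟩ := hf x hx y hy x' hx' y' hy'
  set a := f x x' with ha_def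
  set u := f y x' - f x x' with hu_def
  set v := f x y' - f x x' with hv_def
  set w := f y y' - f x y' - f y x' + f x x' with hw_def
  obtain ⟨ξ, hξ, η, hη, hid⟩ := core_mvt A hA a u v w
  have e1 : a + u + v + w = f y y' := by rw [ha_def, hu_def, hv_def, hw_def]; ring
  have e2 : a + v = f x y' := by rw [ha_def, hv_def]; ring
  have e3 : a + u = f y x' := by rw [ha_def, hu_def]; ring
  rw [e1, e2, e3] at hid
  set p := a + ξ*u + η*(v + ξ*w) with hp_def
  -- membership facts
  have ham : a ∈ Set.Icc m M := hSmem _ ⟨x, hx, x', hx', rfl⟩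
  have hbm : a + u ∈ Set.Icc m M := by rw [e3]; exact hSmem _ ⟨y, hy, x', hx', rfl⟩
  have hcm : a + v ∈ Set.Icc m M := by rw [e2]; exact hSmem _ ⟨x, hx, y', hy', rfl⟩
  have hdm : a + u + v + w ∈ Set.Icc m M := by rw [e1]; exact hSmem _ ⟨y, hy, y', hy', rfl⟩
  have hpm : p ∈ Set.Icc m M := by
    obtain ⟨hξ0, hξ1⟩ := hξ; obtain ⟨hη0, hη1⟩ := hη
    constructor
    · nlinarith [mul_nonneg (mul_nonneg (by linarith : (0:ℝ) ≤ 1-ξ) (by linarith : (0:ℝ) ≤ 1-η)) (sub_nonneg.2 ham.1),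
        mul_nonneg (mul_nonneg hξ0.le (by linarith : (0:ℝ) ≤ 1-η)) (sub_nonneg.2 hbm.1),
        mul_nonneg (mul_nonneg (by linarith : (0:ℝ) ≤ 1-ξ) hη0.le) (sub_nonneg.2 hcm.1),
        mul_nonneg (mul_nonneg hξ0.le hη0.le) (sub_nonneg.2 hdm.1)]
    · nlinarith [mul_nonneg (mul_nonneg (by linarith : (0:ℝ) ≤ 1-ξ) (by linarith : (0:ℝ) ≤ 1-η)) (sub_nonneg.2 ham.2),
        mul_nonneg (mul_nonneg hξ0.le (by linarith : (0:ℝ) ≤ 1-η)) (sub_nonneg.2 hbm.2),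
        mul_nonneg (mul_nonneg (by linarith : (0:ℝ) ≤ 1-ξ) hη0.le) (sub_nonneg.2 hcm.2),
        mul_nonneg (mul_nonneg hξ0.le hη0.le) (sub_nonneg.2 hdm.2)]
  -- distance from p to a
  have hpa : |p - a| ≤ |u| + |v| + |w| := by
    have hq : p - a = ξ*u + η*v + (η*ξ)*w := by rw [hp_def]; ring
    rw [hq]
    have l1 : |ξ*u| ≤ |u| := by
      rw [abs_mul, abs_of_pos hξ.1]; exact mul_le_of_le_one_left (abs_nonneg u) hξ.2.le
    have l2 : |η*v| ≤ |v| := by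
      rw [abs_mul, abs_of_pos hη.1]; exact mul_le_of_le_one_left (abs_nonneg v) hη.2.le
    have l3 : |(η*ξ)*w| ≤ |w| := by
      rw [abs_mul, abs_mul, abs_of_pos hη.1, abs_of_pos hξ.1]
      have hle : η*ξ ≤ 1 := by nlinarith [hξ.1.le, hη.1.le, hξ.2.le, hη.2.le]
      calc η * ξ * |w| = (η*ξ) * |w| := by ring
        _ ≤ 1 * |w| := mul_le_mul_of_nonneg_right hle (abs_nonneg w)
        _ = |w| := one_mul _
    calc |ξ*u + η*v + (η*ξ)*w| ≤ |ξ*u| + |η*v| + |(η*ξ)*w| := abs_add_three _ _ _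
      _ ≤ |u| + |v| + |w| := by linarith
  -- the three main estimates
  have hE1 : |deriv A p - deriv A a| ≤ B * (|u| + |v| + |w|) :=
    (hA'lip p hpm a ham).trans (mul_le_mul_of_nonneg_left hpa hB0)
  have hE2 : |deriv (deriv A) p - deriv (deriv A) a| ≤ (K:ℝ) * (|u| + |v| + |w|) :=
    (hKlip p hpm a ham).trans (mul_le_mul_of_nonneg_left hpa K.2)
  have hE3 : |deriv (deriv A) p| ≤ B := hBb p hpm
  -- rewrite the goal using the identity
  rw [hid]
  -- abbreviate dyadic powers
  set D1 := dyadicDist x y ^ α with hD1_def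
  set D2 := dyadicDist x' y' ^ α with hD2_def
  have hD10 : 0 ≤ D1 := Real.rpow_nonneg (dyadicDist_nonneg x y) α
  have hD20 : 0 ≤ D2 := Real.rpow_nonneg (dyadicDist_nonneg x' y') α
  have hD11 : D1 ≤ 1 := Real.rpow_le_one (dyadicDist_nonneg x y) (dyadicDist_le_one x y hx hy) hα.le
  have hD21 : D2 ≤ 1 := Real.rpow_le_one (dyadicDist_nonneg x' y') (dyadicDist_le_one x' y' hx' hy') hα.le
  have hs2α : dyadicDist x y ^ (2*α) = D1 * D1 := by
    rw [hD1_def, show 2*α = α + α by ring,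
      Real.rpow_add' (dyadicDist_nonneg x y) (by positivity)]
  have ht2α : dyadicDist x' y' ^ (2*α) = D2 * D2 := by
    rw [hD2_def, show 2*α = α + α by ring,
      Real.rpow_add' (dyadicDist_nonneg x' y') (by positivity)]
  rw [hs2α, ht2α]
  -- Hölder bounds
  have hu' : |u| ≤ C * D1 := hu
  have hv' : |v| ≤ C * D2 := hv
  have hw' : |w| ≤ C * (D1 * D2) := hw
  have hfin := final_est (deriv A p) (deriv A a) (deriv (deriv A) p) (deriv (deriv A) a)
    u v w ξ η B (K:ℝ) C D1 D2 hξ hη hB0 K.2 hC hE1 hE2 hE3 hD10 hD11 hD20 hD21 hu' hv' hw'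
  linarith [hfin]
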